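/- arXiv:2304.05092 — 2 statements merged into one kernel-verified Lean document; each statement's English description precedes it below -/
import Mathlib

section
/- Let H satisfy (C3), (CNH) and (CVX), let z : ℝ → ℝ be the unique function with ∂ₚH(x,z(x)) = 0 for all x, and let K = max_{x∈ℝ} H(x,z(x)). Then there exist functions m, M : ℝ × (K, +∞) → ℝ uniquely characterized, for every x ∈ ℝ and c > K, by H(x, m(x,c)) = c with m(x,c) < z(x), and H(x, M(x,c)) = c with M(x,c) > z(x). Moreover: (i) m and M are of class C¹ on ℝ × (K,+∞); (ii) ∂ₓm(x,c) = 0 and ∂ₓM(x,c) = 0 whenever |x| > X and c > K; (iii) for every x, c ↦ m(x,c) is decreasing and c ↦ M(x,c) is increasing; (iv) for every x, m(x,c) → −∞ and M(x,c) → +∞ as c → +∞. -/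
open Real Set MeasureTheory Filter Topology

noncomputable section

/-- Partial derivative of `H` in its first (space) variable. -/
def pdx (H : ℝ → ℝ → ℝ) (x p : ℝ) : ℝ := deriv (fun y => H y p) x

/-- Partial derivative of `H` in its second (momentum) variable. -/
def pdp (H : ℝ → ℝ → ℝ) (x p : ℝ) : ℝ := deriv (fun u => H x u) p

/-- (C3) Smoothness: `H ∈ C³(ℝ²; ℝ)`. -/
def CondC3 (H : ℝ → ℝ → ℝ) : Prop := ContDiff ℝ 3 (Function.uncurry H)

/-- (CNH) Compact non-homogeneity: `∂ₓ H (x,p) = 0` for `|x| ≥ X`. -/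
def CondCNH (H : ℝ → ℝ → ℝ) : Prop := ∃ X > (0:ℝ), ∀ x p : ℝ, X ≤ |x| → pdx H x p = 0

/-- (CVX) Strong convexity: for every `x`, `p ↦ ∂ₚ H (x,p)` is an increasing
`C¹`-diffeomorphism of `ℝ` onto itself. -/
def CondCVX (H : ℝ → ℝ → ℝ) : Prop :=
  ∀ x : ℝ, StrictMono (pdp H x) ∧ Function.Bijective (pdp H x) ∧
    ContDiff ℝ 1 (pdp H x) ∧ ContDiff ℝ 1 (Function.invFun (pdp H x))

variable {H : ℝ → ℝ → ℝ}

lemma hH1 (hC3 : CondC3 H) : ContDiff ℝ 1 (Function.uncurry H) := hC3.of_le (by norm_num)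

lemma hHx (hC3 : CondC3 H) (x : ℝ) : ContDiff ℝ 1 (H x) :=
  (hH1 hC3).comp (contDiff_prodMk_right x)

lemma hHp (hC3 : CondC3 H) (p : ℝ) : ContDiff ℝ 1 (fun y => H y p) :=
  (hH1 hC3).comp (contDiff_prodMk_left p)

lemma pdp_fderiv (hC3 : CondC3 H) (x p : ℝ) :
    pdp H x p = fderiv ℝ (Function.uncurry H) (x, p) (0, 1) := by
  have h1 : HasDerivAt (fun t : ℝ => (x, t)) ((0 : ℝ), (1 : ℝ)) p :=
    (hasDerivAt_const p x).prodMk (hasDerivAt_id p)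
  have h2 := (((hH1 hC3).differentiable one_ne_zero) (x, p)).hasFDerivAt.comp_hasDerivAt p h1
  exact HasDerivAt.deriv (f := fun u => H x u) h2

lemma pdx_fderiv (hC3 : CondC3 H) (x p : ℝ) :
    pdx H x p = fderiv ℝ (Function.uncurry H) (x, p) (1, 0) := by
  have h1 : HasDerivAt (fun t : ℝ => (t, p)) ((1 : ℝ), (0 : ℝ)) x :=
    (hasDerivAt_id x).prodMk (hasDerivAt_const x p)
  have h2 := (((hH1 hC3).differentiable one_ne_zero) (x, p)).hasFDerivAt.comp_hasDerivAt x h1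
  exact HasDerivAt.deriv (f := fun y => H y p) h2

lemma pdp_cont (hC3 : CondC3 H) : Continuous (fun v : ℝ × ℝ => pdp H v.1 v.2) := by
  have : (fun v : ℝ × ℝ => pdp H v.1 v.2)
      = fun v => fderiv ℝ (Function.uncurry H) v (0, 1) := by
    funext v; exact pdp_fderiv hC3 v.1 v.2
  rw [this]
  exact ((hH1 hC3).continuous_fderiv one_ne_zero).clm_apply continuous_const

lemma hasDerivAt_Hx (hC3 : CondC3 H) (x p : ℝ) : HasDerivAt (H x) (pdp H x p) p :=
  ((hHx hC3 x).differentiable one_ne_zero p).hasDerivAt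

variable {z : ℝ → ℝ}

lemma antiOn (hC3 : CondC3 H) (hCVX : CondCVX H) (hz : ∀ x, pdp H x (z x) = 0) (x : ℝ) :
    StrictAntiOn (H x) (Iic (z x)) := by
  apply strictAntiOn_of_deriv_neg (convex_Iic _) (hHx hC3 x).continuous.continuousOn
  intro p hp
  rw [interior_Iic] at hp
  have h := (hCVX x).1 (show p < z x from hp)
  rw [hz x] at h
  exact h

lemma monoOn (hC3 : CondC3 H) (hCVX : CondCVX H) (hz : ∀ x, pdp H x (z x) = 0) (x : ℝ) :
    StrictMonoOn (H x) (Ici (z x)) := by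
  apply strictMonoOn_of_deriv_pos (convex_Ici _) (hHx hC3 x).continuous.continuousOn
  intro p hp
  rw [interior_Ici] at hp
  have h := (hCVX x).1 (show z x < p from hp)
  rw [hz x] at h
  exact h

lemma tendstoTop (hC3 : CondC3 H) (hCVX : CondCVX H) (x : ℝ) :
    Tendsto (H x) atTop atTop := by
  obtain ⟨p₁, hp₁⟩ := (hCVX x).2.1.2 1
  have mono : MonotoneOn (fun p => H x p - p) (Ici p₁) := by
    apply monotoneOn_of_deriv_nonneg (convex_Ici _)
      (((hHx hC3 x).continuous.sub continuous_id).continuousOn)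
      (fun p _ => (((hHx hC3 x).differentiable one_ne_zero p).sub
        (differentiable_id p)).differentiableWithinAt)
    intro p hp
    rw [interior_Ici] at hp
    rw [deriv_sub ((hHx hC3 x).differentiable one_ne_zero p) (differentiable_id p), deriv_id]
    have : (1:ℝ) ≤ pdp H x p := by
      rw [← hp₁]; exact ((hCVX x).1.monotone hp.le)
    show (0:ℝ) ≤ deriv (H x) p - 1
    have hpd : deriv (H x) p = pdp H x p := rfl
    rw [hpd]; linarith
  apply tendsto_atTop_mono' _ _ (tendsto_atTop_add_const_left _ (H x p₁ - p₁) tendsto_id)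
  filter_upwards [eventually_ge_atTop p₁] with p hp
  have := mono (self_mem_Ici) hp hp
  simp only at this
  simp only [id_eq]
  linarith [this]

lemma tendstoBot (hC3 : CondC3 H) (hCVX : CondCVX H) (x : ℝ) :
    Tendsto (H x) atBot atTop := by
  obtain ⟨p₂, hp₂⟩ := (hCVX x).2.1.2 (-1)
  have anti : AntitoneOn (fun p => H x p + p) (Iic p₂) := by
    apply antitoneOn_of_deriv_nonpos (convex_Iic _)
      (((hHx hC3 x).continuous.add continuous_id).continuousOn)
      (fun p _ => (((hHx hC3 x).differentiable one_ne_zero p).add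
        (differentiable_id p)).differentiableWithinAt)
    intro p hp
    rw [interior_Iic] at hp
    rw [deriv_add ((hHx hC3 x).differentiable one_ne_zero p) (differentiable_id p), deriv_id]
    have : pdp H x p ≤ -1 := by
      rw [← hp₂]; exact ((hCVX x).1.monotone hp.le)
    show deriv (H x) p + 1 ≤ (0:ℝ)
    have hpd : deriv (H x) p = pdp H x p := rfl
    rw [hpd]; linarith
  apply tendsto_atTop_mono' _ _ (tendsto_atTop_add_const_left _ (H x p₂ + p₂) tendsto_neg_atBot_atTop)
  filter_upwards [eventually_le_atBot p₂] with p hp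
  have := anti hp (self_mem_Iic) hp
  simp only at this
  show H x p₂ + p₂ + -p ≤ H x p
  linarith [this]

lemma exM (hC3 : CondC3 H) (hCVX : CondCVX H) (x c : ℝ) (hc : H x (z x) < c) :
    ∃ p, z x < p ∧ H x p = c := by
  obtain ⟨b, hb1, hb2⟩ := (((tendstoTop hC3 hCVX x).eventually_ge_atTop c).and
    (eventually_ge_atTop (z x))).exists
  obtain ⟨p, hp, hHp⟩ := intermediate_value_Icc hb2 (hHx hC3 x).continuous.continuousOn
    (⟨hc.le, hb1⟩ : c ∈ Icc (H x (z x)) (H x b))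
  refine ⟨p, lt_of_le_of_ne hp.1 ?_, hHp⟩
  rintro rfl; rw [hHp] at hc; exact lt_irrefl _ hc

lemma exm (hC3 : CondC3 H) (hCVX : CondCVX H) (x c : ℝ) (hc : H x (z x) < c) :
    ∃ p, p < z x ∧ H x p = c := by
  obtain ⟨b, hb1, hb2⟩ := (((tendstoBot hC3 hCVX x).eventually_ge_atTop c).and
    (eventually_le_atBot (z x))).exists
  obtain ⟨p, hp, hHp⟩ := intermediate_value_Icc' hb2 (hHx hC3 x).continuous.continuousOn
    (⟨hc.le, hb1⟩ : c ∈ Icc (H x (z x)) (H x b))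
  refine ⟨p, lt_of_le_of_ne hp.2 ?_, hHp⟩
  rintro rfl; rw [hHp] at hc; exact lt_irrefl _ hc

lemma localinv (hC3 : CondC3 H) (x₀ p₀ : ℝ) (hb : pdp H x₀ p₀ ≠ 0) :
    ∃ G : ℝ × ℝ → ℝ, ContDiffAt ℝ 1 G (x₀, H x₀ p₀) ∧ ContinuousAt G (x₀, H x₀ p₀) ∧
      G (x₀, H x₀ p₀) = p₀ ∧ ∀ᶠ y : ℝ × ℝ in 𝓝 (x₀, H x₀ p₀), H y.1 (G y) = y.2 := by
  set a := pdx H x₀ p₀ with ha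
  set b := pdp H x₀ p₀ with hbdef
  set F : ℝ × ℝ → ℝ × ℝ := fun v => (v.1, Function.uncurry H v) with hF
  have hFsm : ContDiffAt ℝ 1 F (x₀, p₀) := (contDiff_fst.prodMk (hH1 hC3)).contDiffAt
  set L1 : ℝ × ℝ →L[ℝ] ℝ := ContinuousLinearMap.fst ℝ ℝ ℝ with hL1
  set L2 : ℝ × ℝ →L[ℝ] ℝ := ContinuousLinearMap.snd ℝ ℝ ℝ with hL2
  set f : ℝ × ℝ →L[ℝ] ℝ × ℝ := L1.prod (a • L1 + b • L2) with hf
  set g : ℝ × ℝ →L[ℝ] ℝ × ℝ := L1.prod (b⁻¹ • (L2 - a • L1)) with hg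
  have hgf : Function.LeftInverse g f := by
    intro v
    simp only [hf, hg, hL1, hL2, ContinuousLinearMap.prod_apply,
      ContinuousLinearMap.add_apply, ContinuousLinearMap.smul_apply,
      ContinuousLinearMap.sub_apply, ContinuousLinearMap.coe_fst',
      ContinuousLinearMap.coe_snd', smul_eq_mul]
    refine Prod.ext rfl ?_
    field_simp
    ring
  have hfg : Function.RightInverse g f := by
    intro v
    simp only [hf, hg, hL1, hL2, ContinuousLinearMap.prod_apply,
      ContinuousLinearMap.add_apply, ContinuousLinearMap.smul_apply,
      ContinuousLinearMap.sub_apply, ContinuousLinearMap.coe_fst',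
      ContinuousLinearMap.coe_snd', smul_eq_mul]
    refine Prod.ext rfl ?_
    field_simp
    ring
  set e : (ℝ × ℝ) ≃L[ℝ] ℝ × ℝ := ContinuousLinearEquiv.equivOfInverse f g hgf hfg with he
  have hder : fderiv ℝ (Function.uncurry H) (x₀, p₀) = a • L1 + b • L2 := by
    apply ContinuousLinearMap.ext
    intro v
    have hv : v = v.1 • ((1:ℝ), (0:ℝ)) + v.2 • ((0:ℝ), (1:ℝ)) := by
      refine Prod.ext ?_ ?_ <;> simp
    conv_lhs => rw [hv]
    rw [map_add, _root_.map_smul, _root_.map_smul]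
    rw [← pdx_fderiv hC3, ← pdp_fderiv hC3]
    simp only [hL1, hL2, ContinuousLinearMap.add_apply, ContinuousLinearMap.smul_apply,
      ContinuousLinearMap.coe_fst', ContinuousLinearMap.coe_snd', smul_eq_mul]
    ring
  have hd' : HasFDerivAt F (e : ℝ × ℝ →L[ℝ] ℝ × ℝ) (x₀, p₀) := by
    have h1 : HasFDerivAt (Function.uncurry H) (a • L1 + b • L2) (x₀, p₀) := by
      rw [← hder]
      exact (((hH1 hC3).differentiable one_ne_zero) (x₀, p₀)).hasFDerivAt
    exact hasFDerivAt_fst.prodMk h1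
  set Ginv := hFsm.localInverse hd' one_ne_zero with hGinv
  have hcd : ContDiffAt ℝ 1 Ginv (F (x₀, p₀)) := hFsm.to_localInverse hd' one_ne_zero
  have hri : ∀ᶠ y in 𝓝 (F (x₀, p₀)), F (Ginv y) = y :=
    (hFsm.hasStrictFDerivAt' hd' one_ne_zero).eventually_right_inverse
  have himg : Ginv (F (x₀, p₀)) = (x₀, p₀) := hFsm.localInverse_apply_image hd' one_ne_zero
  have hFx : F (x₀, p₀) = (x₀, H x₀ p₀) := rfl
  refine ⟨fun y => (Ginv y).2, ?_, ?_, ?_, ?_⟩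
  · exact ContDiffAt.comp _ contDiffAt_snd (hFx ▸ hcd)
  · exact (ContDiffAt.comp _ contDiffAt_snd (hFx ▸ hcd)).continuousAt
  · show (Ginv (x₀, H x₀ p₀)).2 = p₀
    rw [← hFx, himg]
  · rw [← hFx]
    filter_upwards [hri] with y hy
    have hy' : ((Ginv y).1, Function.uncurry H (Ginv y)) = y := hy
    simp only [Prod.ext_iff] at hy'
    obtain ⟨h1, h2⟩ := hy'
    show H y.1 (Ginv y).2 = y.2
    rw [← h1]
    exact h2
/-- Lemma: existence, uniqueness and properties of the lower/upper level-set functions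
`m, M : ℝ × (K, +∞) → ℝ` with `H(x, m(x,c)) = c`, `m(x,c) < z(x)` and
`H(x, M(x,c)) = c`, `M(x,c) > z(x)`. -/
theorem stmt_3 (H : ℝ → ℝ → ℝ) (hC3 : CondC3 H) (X : ℝ) (hX : 0 < X)
    (hCNH : ∀ x p : ℝ, X ≤ |x| → pdx H x p = 0) (hCVX : CondCVX H)
    (z : ℝ → ℝ) (hz : ∀ x : ℝ, pdp H x (z x) = 0)
    (K : ℝ) (hK : IsGreatest (Set.range fun x => H x (z x)) K) :
    ∃ m M : ℝ → ℝ → ℝ,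
      (∀ x c : ℝ, K < c →
        H x (m x c) = c ∧ m x c < z x ∧ H x (M x c) = c ∧ z x < M x c) ∧
      (∀ m' M' : ℝ → ℝ → ℝ,
        (∀ x c : ℝ, K < c →
          H x (m' x c) = c ∧ m' x c < z x ∧ H x (M' x c) = c ∧ z x < M' x c) →
        ∀ x c : ℝ, K < c → m' x c = m x c ∧ M' x c = M x c) ∧
      ContDiffOn ℝ 1 (fun y : ℝ × ℝ => m y.1 y.2) (Set.univ ×ˢ Set.Ioi K) ∧
      ContDiffOn ℝ 1 (fun y : ℝ × ℝ => M y.1 y.2) (Set.univ ×ˢ Set.Ioi K) ∧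
      (∀ x c : ℝ, X < |x| → K < c →
        deriv (fun y => m y c) x = 0 ∧ deriv (fun y => M y c) x = 0) ∧
      (∀ x : ℝ, StrictAntiOn (m x) (Set.Ioi K) ∧ StrictMonoOn (M x) (Set.Ioi K)) ∧
      (∀ x : ℝ, Tendsto (m x) atTop atBot ∧ Tendsto (M x) atTop atTop) := by
  classical
  have hzK : ∀ x, H x (z x) ≤ K := fun x => hK.2 ⟨x, rfl⟩
  set m : ℝ → ℝ → ℝ := fun x c =>
    if h : H x (z x) < c then (exm hC3 hCVX x c h).choose else 0 with hmdef
  set M : ℝ → ℝ → ℝ := fun x c =>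
    if h : H x (z x) < c then (exM hC3 hCVX x c h).choose else 0 with hMdef
  have hm : ∀ x c, K < c → H x (m x c) = c ∧ m x c < z x := by
    intro x c hc
    have h : H x (z x) < c := lt_of_le_of_lt (hzK x) hc
    have hs := (exm hC3 hCVX x c h).choose_spec
    simp only [hmdef, dif_pos h]
    exact ⟨hs.2, hs.1⟩
  have hM : ∀ x c, K < c → H x (M x c) = c ∧ z x < M x c := by
    intro x c hc
    have h : H x (z x) < c := lt_of_le_of_lt (hzK x) hc
    have hs := (exM hC3 hCVX x c h).choose_spec
    simp only [hMdef, dif_pos h]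
    exact ⟨hs.2, hs.1⟩
  have hum : ∀ x c, K < c → ∀ p, p < z x → H x p = c → p = m x c := by
    intro x c hc p hp hHp
    exact (antiOn hC3 hCVX hz x).injOn hp.le (hm x c hc).2.le
      (by rw [hHp, (hm x c hc).1])
  have huM : ∀ x c, K < c → ∀ p, z x < p → H x p = c → p = M x c := by
    intro x c hc p hp hHp
    exact (monoOn hC3 hCVX hz x).injOn hp.le (hM x c hc).2.le
      (by rw [hHp, (hM x c hc).1])
  have key_m : ∀ x₀ c₀ : ℝ, K < c₀ →
      ContDiffAt ℝ 1 (fun y : ℝ × ℝ => m y.1 y.2) (x₀, c₀) := by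
    intro x₀ c₀ hc
    obtain ⟨hH0, hlt⟩ := hm x₀ c₀ hc
    have hbneg : pdp H x₀ (m x₀ c₀) < 0 := by
      have h := (hCVX x₀).1 hlt; rw [hz x₀] at h; exact h
    obtain ⟨G, hGc, hGcont, hGval, hGev⟩ := localinv hC3 x₀ (m x₀ c₀) (ne_of_lt hbneg)
    rw [hH0] at hGc hGcont hGval hGev
    have hcontpdp : ContinuousAt (fun y : ℝ × ℝ => pdp H y.1 (G y)) (x₀, c₀) := by
      have h1 : ContinuousAt (fun y : ℝ × ℝ => (y.1, G y)) (x₀, c₀) :=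
        continuousAt_fst.prodMk hGcont
      exact ContinuousAt.comp (g := fun v : ℝ × ℝ => pdp H v.1 v.2)
        (f := fun y : ℝ × ℝ => (y.1, G y)) ((pdp_cont hC3).continuousAt) h1
    have hev2 : ∀ᶠ y : ℝ × ℝ in 𝓝 (x₀, c₀), pdp H y.1 (G y) < 0 := by
      apply hcontpdp.eventually_lt_const
      show pdp H x₀ (G (x₀, c₀)) < 0
      rw [hGval]; exact hbneg
    have hev3 : ∀ᶠ y : ℝ × ℝ in 𝓝 (x₀, c₀), K < y.2 := by
      have hsnd : ContinuousAt (Prod.snd : ℝ × ℝ → ℝ) (x₀, c₀) := continuousAt_snd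
      exact hsnd.eventually_const_lt hc
    have heq : (fun y : ℝ × ℝ => m y.1 y.2) =ᶠ[𝓝 (x₀, c₀)] G := by
      filter_upwards [hGev, hev2, hev3] with y h1 h2 h3
      have hGz : G y < z y.1 := by
        by_contra hcon
        push_neg at hcon
        have h4 := (hCVX y.1).1.monotone hcon
        rw [hz y.1] at h4
        linarith
      exact (hum y.1 y.2 h3 (G y) hGz h1).symm
    exact hGc.congr_of_eventuallyEq heq
  have key_M : ∀ x₀ c₀ : ℝ, K < c₀ →
      ContDiffAt ℝ 1 (fun y : ℝ × ℝ => M y.1 y.2) (x₀, c₀) := by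
    intro x₀ c₀ hc
    obtain ⟨hH0, hlt⟩ := hM x₀ c₀ hc
    have hbpos : 0 < pdp H x₀ (M x₀ c₀) := by
      have h := (hCVX x₀).1 hlt; rw [hz x₀] at h; exact h
    obtain ⟨G, hGc, hGcont, hGval, hGev⟩ := localinv hC3 x₀ (M x₀ c₀) (ne_of_gt hbpos)
    rw [hH0] at hGc hGcont hGval hGev
    have hcontpdp : ContinuousAt (fun y : ℝ × ℝ => pdp H y.1 (G y)) (x₀, c₀) := by
      have h1 : ContinuousAt (fun y : ℝ × ℝ => (y.1, G y)) (x₀, c₀) :=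
        continuousAt_fst.prodMk hGcont
      exact ContinuousAt.comp (g := fun v : ℝ × ℝ => pdp H v.1 v.2)
        (f := fun y : ℝ × ℝ => (y.1, G y)) ((pdp_cont hC3).continuousAt) h1
    have hev2 : ∀ᶠ y : ℝ × ℝ in 𝓝 (x₀, c₀), 0 < pdp H y.1 (G y) := by
      apply hcontpdp.eventually_const_lt
      show 0 < pdp H x₀ (G (x₀, c₀))
      rw [hGval]; exact hbpos
    have hev3 : ∀ᶠ y : ℝ × ℝ in 𝓝 (x₀, c₀), K < y.2 := by
      have hsnd : ContinuousAt (Prod.snd : ℝ × ℝ → ℝ) (x₀, c₀) := continuousAt_snd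
      exact hsnd.eventually_const_lt hc
    have heq : (fun y : ℝ × ℝ => M y.1 y.2) =ᶠ[𝓝 (x₀, c₀)] G := by
      filter_upwards [hGev, hev2, hev3] with y h1 h2 h3
      have hGz : z y.1 < G y := by
        by_contra hcon
        push_neg at hcon
        have h4 := (hCVX y.1).1.monotone hcon
        rw [hz y.1] at h4
        linarith
      exact (huM y.1 y.2 h3 (G y) hGz h1).symm
    exact hGc.congr_of_eventuallyEq heq
  have hflat : ∀ s : Set ℝ, IsOpen s → Convex ℝ s → (∀ t ∈ s, X ≤ |t|) →
      ∀ x ∈ s, ∀ y ∈ s, ∀ p, H y p = H x p := by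
    intro s hso hsc hsX x hx y hy p
    have hdiff : ∀ t : ℝ, DifferentiableAt ℝ (fun u => H u p) t :=
      fun t => (hHp hC3 p).differentiable one_ne_zero t
    have hmono : MonotoneOn (fun u => H u p) s := by
      apply monotoneOn_of_deriv_nonneg hsc (hHp hC3 p).continuous.continuousOn
        (fun t _ => (hdiff t).differentiableWithinAt)
      intro t ht
      rw [hso.interior_eq] at ht
      rw [show deriv (fun u => H u p) t = pdx H t p from rfl, hCNH t p (hsX t ht)]
    have hanti : AntitoneOn (fun u => H u p) s := by
      apply antitoneOn_of_deriv_nonpos hsc (hHp hC3 p).continuous.continuousOn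
        (fun t _ => (hdiff t).differentiableWithinAt)
      intro t ht
      rw [hso.interior_eq] at ht
      rw [show deriv (fun u => H u p) t = pdx H t p from rfl, hCNH t p (hsX t ht)]
    rcases le_total x y with hxy | hxy
    · exact le_antisymm (hanti hx hy hxy) (hmono hx hy hxy)
    · exact le_antisymm (hmono hy hx hxy) (hanti hy hx hxy)
  have hderiv0 : ∀ x c : ℝ, X < |x| → K < c →
      deriv (fun y => m y c) x = 0 ∧ deriv (fun y => M y c) x = 0 := by
    intro x c hxX hc
    obtain ⟨s, hso, hsc, hsX, hxs⟩ :
        ∃ s : Set ℝ, IsOpen s ∧ Convex ℝ s ∧ (∀ t ∈ s, X ≤ |t|) ∧ x ∈ s := by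
      rcases lt_abs.mp hxX with h | h
      · exact ⟨Ioi X, isOpen_Ioi, convex_Ioi X, fun t ht =>
          le_trans (le_of_lt ht) (le_abs_self t), h⟩
      · refine ⟨Iio (-X), isOpen_Iio, convex_Iio _, fun t ht => ?_, by
          simp only [mem_Iio]; linarith⟩
        have ht' : t < -X := ht
        exact le_trans (by linarith) (neg_le_abs t)
    have hys : ∀ y ∈ s, m y c = m x c ∧ M y c = M x c := by
      intro y hy
      have hHeq : ∀ p, H y p = H x p := hflat s hso hsc hsX x hxs y hy
      have hpdp : pdp H y = pdp H x := by
        funext u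
        show deriv (fun v => H y v) u = deriv (fun v => H x v) u
        congr 1
        funext v
        exact hHeq v
      have hzz : z y = z x := by
        apply (hCVX y).1.injective
        rw [hz y, hpdp, hz x]
      constructor
      · refine (hum y c hc (m x c) ?_ ?_).symm
        · rw [hzz]; exact (hm x c hc).2
        · rw [hHeq]; exact (hm x c hc).1
      · refine (huM y c hc (M x c) ?_ ?_).symm
        · rw [hzz]; exact (hM x c hc).2
        · rw [hHeq]; exact (hM x c hc).1
    have hsnb : s ∈ 𝓝 x := hso.mem_nhds hxs
    constructor
    · have hev : (fun y => m y c) =ᶠ[𝓝 x] (fun _ => m x c) := by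
        filter_upwards [hsnb] with y hy using (hys y hy).1
      rw [hev.deriv_eq, deriv_const]
    · have hev : (fun y => M y c) =ᶠ[𝓝 x] (fun _ => M x c) := by
        filter_upwards [hsnb] with y hy using (hys y hy).2
      rw [hev.deriv_eq, deriv_const]
  refine ⟨m, M, ?_, ?_, ?_, ?_, hderiv0, ?_, ?_⟩
  · intro x c hc
    exact ⟨(hm x c hc).1, (hm x c hc).2, (hM x c hc).1, (hM x c hc).2⟩
  · intro m' M' hprop x c hc
    obtain ⟨h1, h2, h3, h4⟩ := hprop x c hc
    exact ⟨hum x c hc _ h2 h1, huM x c hc _ h4 h3⟩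
  · intro y hy
    have := key_m y.1 y.2 hy.2
    rw [Prod.mk.eta] at this
    exact this.contDiffWithinAt
  · intro y hy
    have := key_M y.1 y.2 hy.2
    rw [Prod.mk.eta] at this
    exact this.contDiffWithinAt
  · intro x
    constructor
    · intro c hc c' hc' hlt
      have h1 := hm x c hc
      have h2 := hm x c' hc'
      rcases lt_trichotomy (m x c') (m x c) with h | h | h
      · exact h
      · exfalso; rw [← h1.1, ← h2.1, h] at hlt; exact lt_irrefl _ hlt
      · exfalso
        have := (antiOn hC3 hCVX hz x) h1.2.le h2.2.le h
        rw [h1.1, h2.1] at this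
        exact absurd hlt (not_lt.mpr this.le)
    · intro c hc c' hc' hlt
      have h1 := hM x c hc
      have h2 := hM x c' hc'
      rcases lt_trichotomy (M x c) (M x c') with h | h | h
      · exact h
      · exfalso; rw [← h1.1, ← h2.1, h] at hlt; exact lt_irrefl _ hlt
      · exfalso
        have := (monoOn hC3 hCVX hz x) h2.2.le h1.2.le h
        rw [h1.1, h2.1] at this
        exact absurd hlt (not_lt.mpr this.le)
  · intro x
    constructor
    · rw [tendsto_atBot]
      intro B
      filter_upwards [eventually_gt_atTop (max K (H x (min B (z x - 1))))] with c hcgt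
      have hc : K < c := lt_of_le_of_lt (le_max_left _ _) hcgt
      have hcH : H x (min B (z x - 1)) < c := lt_of_le_of_lt (le_max_right _ _) hcgt
      have hB' : min B (z x - 1) < z x :=
        lt_of_le_of_lt (min_le_right _ _) (by linarith)
      have hlt : m x c < min B (z x - 1) := by
        by_contra hcon
        push_neg at hcon
        have := (antiOn hC3 hCVX hz x).antitoneOn hB'.le (hm x c hc).2.le hcon
        rw [(hm x c hc).1] at this
        linarith
      exact le_trans hlt.le (min_le_left _ _)
    · rw [tendsto_atTop]
      intro B
      filter_upwards [eventually_gt_atTop (max K (H x (max B (z x + 1))))] with c hcgt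
      have hc : K < c := lt_of_le_of_lt (le_max_left _ _) hcgt
      have hcH : H x (max B (z x + 1)) < c := lt_of_le_of_lt (le_max_right _ _) hcgt
      have hB' : z x < max B (z x + 1) :=
        lt_of_lt_of_le (by linarith) (le_max_right _ _)
      have hlt : max B (z x + 1) < M x c := by
        by_contra hcon
        push_neg at hcon
        have := (monoOn hC3 hCVX hz x).monotoneOn (hM x c hc).2.le hB'.le hcon
        rw [(hM x c hc).1] at this
        linarith
      exact le_trans (le_max_left _ _) hlt.le
end
end

section
/- Let g(x) = 1 − (1 − x²)⁴ for |x| ≤ 1 and g(x) = 1 otherwise, and consider the planar ODE system q̇ = p, ṗ = −g′(q). Let p₀ ∈ [√2, 2) and let (q,p) be the solution with initial datum (0, p₀). Then: (i) if p₀ ∈ (√2, 2), then q is strictly increasing on [0,+∞) and q(t) → +∞ as t → +∞; (ii) if p₀ = √2, then q is strictly increasing and concave on [0,+∞) and q(t) → 1 as t → +∞. -/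
open Real Set MeasureTheory Filter Topology

noncomputable section

/-- The potential `g(x) = 1 − (1 − x²)⁴` for `|x| ≤ 1`, and `g(x) = 1` otherwise. -/
def gfun (x : ℝ) : ℝ := if |x| ≤ 1 then 1 - (1 - x ^ 2) ^ 4 else 1

/-- The Hamiltonian `H(x,u) = u²/2 + g(x)` of the example. -/
def Hex (x u : ℝ) : ℝ := u ^ 2 / 2 + gfun x

/-- `(q,p)` solves the planar ODE system `q̇ = p`, `ṗ = −g′(q)`. -/
def SolvesCE (q p : ℝ → ℝ) : Prop :=
  ∀ t : ℝ, HasDerivAt q (p t) t ∧ HasDerivAt p (-(deriv gfun (q t))) t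


/-- derivative of gfun -/
def gd (x : ℝ) : ℝ := if |x| ≤ 1 then 8 * x * (1 - x ^ 2) ^ 3 else 0

lemma hasDerivAt_poly (x : ℝ) :
    HasDerivAt (fun y : ℝ => 1 - (1 - y ^ 2) ^ 4) (8 * x * (1 - x ^ 2) ^ 3) x := by
  have h := (((hasDerivAt_pow 2 x).const_sub 1).pow 4).const_sub 1
  refine h.congr_deriv ?_
  norm_num
  ring

lemma gfun_even (x : ℝ) : gfun (-x) = gfun x := by
  simp [gfun, abs_neg, neg_sq]

lemma hasDerivAt_gfun_one : HasDerivAt gfun 0 1 := by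
  rw [hasDerivAt_iff_tendsto_slope]
  apply squeeze_zero_norm' (a := fun y => 16 * |y - 1| ^ 3)
  · have h1 : ∀ᶠ y in 𝓝[≠] (1:ℝ), y ∈ Ioo (0:ℝ) 2 ∧ y ≠ 1 := by
      filter_upwards [nhdsWithin_le_nhds (Ioo_mem_nhds (show (0:ℝ)<1 by norm_num) (show (1:ℝ)<2 by norm_num)),
        self_mem_nhdsWithin] with y hy hy'
      exact ⟨hy, hy'⟩
    filter_upwards [h1] with y ⟨⟨hy0, hy2⟩, hy1⟩
    have hg1 : gfun 1 = 1 := by norm_num [gfun]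
    rcases le_or_gt y 1 with hle | hlt
    · have hya : |y| ≤ 1 := abs_le.2 ⟨by linarith, hle⟩
      have hslope : slope gfun 1 y = (1 - y) ^ 3 * (1 + y) ^ 4 := by
        rw [slope_def_field, hg1, gfun, if_pos hya]
        have hne : y - 1 ≠ 0 := sub_ne_zero.2 hy1
        field_simp
        ring
      rw [hslope]
      have : ‖(1 - y) ^ 3 * (1 + y) ^ 4‖ = |1 - y| ^ 3 * |1 + y| ^ 4 := by
        rw [norm_mul, norm_pow, norm_pow]; rfl
      rw [this]
      have h1y : |1 - y| = |y - 1| := abs_sub_comm 1 y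
      rw [h1y]
      have h2 : |1 + y| ^ 4 ≤ 16 := by
        have : |1 + y| ≤ 2 := abs_le.2 ⟨by linarith, by linarith⟩
        calc |1 + y| ^ 4 ≤ 2 ^ 4 := pow_le_pow_left₀ (abs_nonneg _) this 4
          _ = 16 := by norm_num
      nlinarith [pow_nonneg (abs_nonneg (y - 1)) 3, abs_nonneg (1 + y)]
    · have hya : ¬ |y| ≤ 1 := by
        rw [abs_of_pos hy0]; linarith
      have : slope gfun 1 y = 0 := by
        rw [slope_def_field, hg1, gfun, if_neg hya]; simp
      rw [this, norm_zero]
      positivity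
  · have hc : Continuous (fun y : ℝ => 16 * |y - 1| ^ 3) := by continuity
    have : Tendsto (fun y : ℝ => 16 * |y - 1| ^ 3) (𝓝 1) (𝓝 (16 * |1 - 1| ^ 3)) := hc.tendsto 1
    simpa using this.mono_left nhdsWithin_le_nhds

lemma hasDerivAt_gfun (x : ℝ) : HasDerivAt gfun (gd x) x := by
  rcases lt_trichotomy |x| 1 with hlt | heq | hgt
  · have hev : gfun =ᶠ[𝓝 x] fun y => 1 - (1 - y ^ 2) ^ 4 := by
      filter_upwards [(isOpen_lt continuous_abs continuous_const).mem_nhds hlt] with y hy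
      exact if_pos (le_of_lt hy)
    have := (hasDerivAt_poly x).congr_of_eventuallyEq hev
    rwa [gd, if_pos hlt.le]
  · have hx2 : x ^ 2 = 1 := by
      have := sq_abs x; rw [heq] at this; linarith [sq_abs x]
    have hgd : gd x = 0 := by
      rw [gd, if_pos heq.le, hx2]; ring
    rw [hgd]
    rcases abs_eq (by norm_num : (0:ℝ) ≤ 1) |>.mp heq with h1 | h1
    · rw [h1]; exact hasDerivAt_gfun_one
    · have : HasDerivAt (fun y => gfun (-y)) (0 * (-1)) (-1) := by
        have hneg : HasDerivAt (fun y : ℝ => -y) (-1) (-1 : ℝ) := hasDerivAt_neg _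
        have h1' : HasDerivAt gfun 0 (-(-1:ℝ)) := by rw [neg_neg]; exact hasDerivAt_gfun_one
        exact h1'.comp _ hneg
      rw [h1]
      have heq : (fun y => gfun (-y)) = gfun := funext gfun_even
      rw [heq] at this
      simpa using this
  · have hev : gfun =ᶠ[𝓝 x] fun _ => 1 := by
      filter_upwards [(isOpen_lt continuous_const continuous_abs).mem_nhds hgt] with y hy
      exact if_neg (not_le.2 hy)
    have := (hasDerivAt_const x (1:ℝ)).congr_of_eventuallyEq hev
    rwa [gd, if_neg (not_le.2 hgt)]

lemma deriv_gfun (x : ℝ) : deriv gfun x = gd x := (hasDerivAt_gfun x).deriv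

lemma gfun_le_one (x : ℝ) : gfun x ≤ 1 := by
  rw [gfun]; split
  · have : (0:ℝ) ≤ (1 - x ^ 2) ^ 4 := by positivity
    linarith
  · exact le_refl 1

lemma gfun_zero : gfun 0 = 0 := by norm_num [gfun]

lemma gfun_eq_one (x : ℝ) (h : 1 ≤ |x|) : gfun x = 1 := by
  rw [gfun]; split
  · rename_i h'
    have : |x| = 1 := le_antisymm h' h
    have hx2 : x ^ 2 = 1 := by rw [← sq_abs, this]; norm_num
    rw [hx2]; ring
  · rfl

lemma gfun_lt_one (x : ℝ) (h : |x| < 1) : gfun x < 1 := by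
  rw [gfun, if_pos h.le]
  have hx2 : x ^ 2 < 1 := by rw [← sq_abs]; nlinarith [abs_nonneg x]
  have h3 : 0 < 1 - x ^ 2 := by linarith
  have : 0 < (1 - x ^ 2) ^ 4 := by positivity
  linarith

lemma gd_eq_zero (x : ℝ) (h : 1 ≤ |x|) : gd x = 0 := by
  rw [gd]; split
  · rename_i h'
    have : |x| = 1 := le_antisymm h' h
    have hx2 : x ^ 2 = 1 := by rw [← sq_abs, this]; norm_num
    rw [hx2]; ring
  · rfl

lemma gd_nonneg (x : ℝ) (h : 0 ≤ x) : 0 ≤ gd x := by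
  rw [gd]; split
  · rename_i h'
    have hx2 : x ^ 2 ≤ 1 := by rw [← sq_abs]; nlinarith [abs_nonneg x, le_of_abs_le h']
    have h3 : (0:ℝ) ≤ 1 - x ^ 2 := by linarith
    nlinarith [pow_nonneg h3 3]
  · exact le_refl 0

/-- polynomial version of gd -/
def Qp (x : ℝ) : ℝ := 8 * x * (1 - x ^ 2) ^ 3

lemma hasDerivAt_Qp (x : ℝ) :
    HasDerivAt Qp (8 * (1 - x ^ 2) ^ 3 - 48 * x ^ 2 * (1 - x ^ 2) ^ 2) x := by
  have h1 : HasDerivAt (fun y : ℝ => (1 - y ^ 2) ^ 3) (3 * (1 - x ^ 2) ^ 2 * (-(2 * x ^ 1))) x :=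
    ((hasDerivAt_pow 2 x).const_sub 1).pow 3
  have h2 : HasDerivAt (fun y : ℝ => 8 * y) 8 x := by
    simpa using (hasDerivAt_id x).const_mul 8
  have := h2.mul h1
  refine this.congr_deriv ?_
  ring

lemma Qp_lipschitz {a b : ℝ} (ha : a ∈ Icc (-1:ℝ) 1) (hb : b ∈ Icc (-1:ℝ) 1) :
    |Qp a - Qp b| ≤ 56 * |a - b| := by
  have key := Convex.norm_image_sub_le_of_norm_hasDerivWithin_le
    (f := Qp) (f' := fun x => 8 * (1 - x ^ 2) ^ 3 - 48 * x ^ 2 * (1 - x ^ 2) ^ 2)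
    (s := Icc (-1:ℝ) 1) (C := 56)
    (fun x _ => (hasDerivAt_Qp x).hasDerivWithinAt)
    (fun x hx => by
      have h1 : x ^ 2 ≤ 1 := by nlinarith [hx.1, hx.2]
      have h2 : (0:ℝ) ≤ 1 - x ^ 2 := by linarith
      have h4 : (1 - x ^ 2) ^ 2 ≤ 1 := by nlinarith [sq_nonneg x]
      have h5 : x ^ 2 * (1 - x ^ 2) ^ 2 ≤ 1 := by nlinarith [sq_nonneg x, sq_nonneg (1 - x^2)]
      have h6 : (1 - x ^ 2) ^ 3 ≤ 1 := by nlinarith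
      have h7 : (0:ℝ) ≤ x ^ 2 * (1 - x ^ 2) ^ 2 := by positivity
      have h8 : (0:ℝ) ≤ (1 - x ^ 2) ^ 3 := by positivity
      simp only [Real.norm_eq_abs, abs_le]
      constructor <;> nlinarith)
    (convex_Icc _ _) hb ha
  simpa [Real.norm_eq_abs, abs_sub_comm] using key

/-- clamp to [-1,1] -/
def clmp (x : ℝ) : ℝ := max (-1) (min 1 x)

lemma clmp_mem (x : ℝ) : clmp x ∈ Icc (-1:ℝ) 1 :=
  ⟨le_max_left _ _, max_le (by norm_num) (min_le_left _ _)⟩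

lemma clmp_lip (a b : ℝ) : |clmp a - clmp b| ≤ |a - b| := by
  calc |clmp a - clmp b| = |max (min 1 a) (-1) - max (min 1 b) (-1)| := by
        rw [clmp, clmp, max_comm _ (-1:ℝ), max_comm _ (-1:ℝ)]
    _ ≤ |min 1 a - min 1 b| := abs_max_sub_max_le_abs _ _ _
    _ ≤ max |(1:ℝ) - 1| |a - b| := abs_min_sub_min_le_max _ _ _ _
    _ ≤ |a - b| := by simp

lemma gd_eq_Qp_clmp (x : ℝ) : gd x = Qp (clmp x) := by
  rcases le_or_gt x (-1) with h | h
  · have h1 : clmp x = -1 := by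
      rw [clmp]
      rcases lt_or_ge x (-1) with h' | h'
      · rw [min_eq_right (by linarith), max_eq_left (by linarith)]
      · have : x = -1 := le_antisymm h h'
        rw [this]; norm_num
    rw [h1]
    have : (1:ℝ) ≤ |x| := by rw [abs_of_nonpos (by linarith)]; linarith
    rw [gd_eq_zero x this, Qp]; norm_num
  · rcases le_or_gt x 1 with h2 | h2
    · have h1 : clmp x = x := by
        rw [clmp, min_eq_right h2, max_eq_right (by linarith)]
      rw [h1, gd, if_pos (abs_le.2 ⟨by linarith, h2⟩), Qp]
    · have h1 : clmp x = 1 := by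
        rw [clmp, min_eq_left (by linarith), max_eq_right (by norm_num)]
      rw [h1, gd_eq_zero x (by rw [abs_of_pos (by linarith)]; linarith), Qp]
      norm_num

lemma gd_lip (a b : ℝ) : |gd a - gd b| ≤ 56 * |a - b| := by
  rw [gd_eq_Qp_clmp, gd_eq_Qp_clmp]
  calc |Qp (clmp a) - Qp (clmp b)| ≤ 56 * |clmp a - clmp b| :=
        Qp_lipschitz (clmp_mem a) (clmp_mem b)
    _ ≤ 56 * |a - b| := by nlinarith [clmp_lip a b, abs_nonneg (a-b)]

/-- the ODE vector field -/
def vf : ℝ → ℝ × ℝ → ℝ × ℝ := fun _ z => (z.2, -gd z.1)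

lemma vf_lip (t : ℝ) : LipschitzOnWith 56 (vf t) Set.univ := by
  apply LipschitzOnWith.of_dist_le_mul
  intro x _ y _
  rw [Prod.dist_eq]
  have h1 : dist (vf t x).1 (vf t y).1 = dist x.2 y.2 := rfl
  have h2 : dist (vf t x).2 (vf t y).2 = dist (gd x.1) (gd y.1) :=
    dist_neg_neg _ _
  rw [h1, h2]
  have hK : ((56 : NNReal) : ℝ) = (56:ℝ) := by norm_num
  rw [hK]
  apply max_le
  · calc dist x.2 y.2 ≤ dist x y := le_max_right _ _
      _ ≤ 56 * dist x y := by nlinarith [dist_nonneg (x := x) (y := y)]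
  · calc dist (gd x.1) (gd y.1) ≤ 56 * dist x.1 y.1 := by
          rw [Real.dist_eq, Real.dist_eq]; exact gd_lip _ _
      _ ≤ 56 * dist x y := by
          have := le_max_left (dist x.1 y.1) (dist x.2 y.2)
          rw [← Prod.dist_eq] at this
          nlinarith

lemma energy_conservation {q p : ℝ → ℝ} (hsol : SolvesCE q p) (t : ℝ) :
    p t ^ 2 + 2 * gfun (q t) = p 0 ^ 2 + 2 * gfun (q 0) := by
  have hE : ∀ s : ℝ, HasDerivAt (fun t => p t ^ 2 + 2 * gfun (q t)) 0 s := by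
    intro s
    have h1 : HasDerivAt p (-(gd (q s))) s := by
      have := (hsol s).2; rwa [deriv_gfun] at this
    have h2 : HasDerivAt (fun t => gfun (q t)) (gd (q s) * p s) s :=
      (hasDerivAt_gfun (q s)).comp s (hsol s).1
    have h3 := (h1.pow 2).add (h2.const_mul 2)
    refine h3.congr_deriv ?_
    ring
  exact is_const_of_deriv_eq_zero (fun s => (hE s).differentiableAt)
    (fun s => (hE s).deriv) t 0

lemma p_pos' {q p : ℝ → ℝ} (hsol : SolvesCE q p) (hne : ∀ t, p t ≠ 0) (h0 : 0 < p 0) :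
    ∀ t, 0 < p t := by
  have hpc : Continuous p := continuous_iff_continuousAt.2 fun t => (hsol t).2.continuousAt
  intro t
  by_contra hle; push_neg at hle
  have h0m : (0:ℝ) ∈ Set.uIcc (p 0) (p t) := Set.mem_uIcc.2 (Or.inr ⟨hle, h0.le⟩)
  obtain ⟨s, -, hs⟩ := intermediate_value_uIcc hpc.continuousOn h0m
  exact hne s hs

lemma q_lower_bound {q p : ℝ → ℝ} (hsol : SolvesCE q p) {c : ℝ}
    (hc : ∀ t, 0 ≤ t → c ≤ p t) : ∀ t, 0 ≤ t → q 0 + c * t ≤ q t := by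
  have hqc : Continuous q := continuous_iff_continuousAt.2 fun t => (hsol t).1.continuousAt
  have hd : ∀ x : ℝ, HasDerivAt (fun t => q t - c * t) (p x - c) x := by
    intro x
    have h2 : HasDerivAt (fun t : ℝ => c * t) c x := by simpa using (hasDerivAt_id x).const_mul c
    exact (hsol x).1.sub h2
  have hmono : MonotoneOn (fun t => q t - c * t) (Set.Ici 0) := by
    apply monotoneOn_of_deriv_nonneg (convex_Ici 0)
    · exact (hqc.sub (continuous_const.mul continuous_id)).continuousOn
    · exact fun x _ => (hd x).differentiableAt.differentiableWithinAt
    · intro x hx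
      rw [interior_Ici] at hx
      rw [(hd x).deriv]
      have := hc x hx.le
      linarith
  intro t ht
  have := hmono (Set.self_mem_Ici) ht ht
  simp only at this
  linarith

lemma no_equilibrium_touch {q p : ℝ → ℝ} (hsol : SolvesCE q p) (s : ℝ)
    (hqs : 1 ≤ |q s|) (hps : p s = 0) : q 0 = q s := by
  set f : ℝ → ℝ × ℝ := fun t => (q t, p t) with hf_def
  set g : ℝ → ℝ × ℝ := fun _ => (q s, 0) with hg_def
  have hgd0 : gd (q s) = 0 := gd_eq_zero _ hqs
  have key : Set.EqOn f g (Set.Ioo (-(|s|+1)) (|s|+1)) := by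
    apply ODE_solution_unique_of_mem_Ioo (v := vf) (s := fun _ => Set.univ) (K := 56)
      (fun t _ => vf_lip t) (t₀ := s)
    · constructor
      · have := neg_abs_le s; linarith
      · have := le_abs_self s; linarith
    · intro t _
      refine ⟨?_, Set.mem_univ _⟩
      have h1 : HasDerivAt p (-(gd (q t))) t := by
        have := (hsol t).2; rwa [deriv_gfun] at this
      exact (hsol t).1.prodMk h1
    · intro t _
      refine ⟨?_, Set.mem_univ _⟩
      have : vf t (g t) = 0 := by
        simp only [vf, hg_def, hgd0, neg_zero]
        rfl
      rw [this]
      exact hasDerivAt_const t _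
    · simp only [hf_def, hg_def, hps]
  have h0mem : (0:ℝ) ∈ Set.Ioo (-(|s|+1)) (|s|+1) := by
    constructor
    · have := abs_nonneg s; linarith
    · have := abs_nonneg s; linarith
  exact congrArg Prod.fst (key h0mem)

/-- Lemma 5.10: behavior of the trajectory issued from `(0, p₀)` with
`p₀ ∈ [√2, 2)`: escape to `+∞` if `p₀ > √2`; strictly increasing, concave
convergence to `1` if `p₀ = √2`. -/
theorem stmt_17 (p₀ : ℝ) (hp₀ : p₀ ∈ Set.Ico (Real.sqrt 2) 2)
    (q p : ℝ → ℝ) (hsol : SolvesCE q p) (hq0 : q 0 = 0) (hp0 : p 0 = p₀) :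
    (Real.sqrt 2 < p₀ → StrictMonoOn q (Set.Ici 0) ∧ Tendsto q atTop atTop) ∧
    (p₀ = Real.sqrt 2 → StrictMonoOn q (Set.Ici 0) ∧ ConcaveOn ℝ (Set.Ici 0) q ∧
      Tendsto q atTop (nhds 1)) := by
  obtain ⟨hge, hlt2⟩ := hp₀
  have hs2 : (0:ℝ) < Real.sqrt 2 := Real.sqrt_pos.2 (by norm_num)
  have hs2sq : Real.sqrt 2 ^ 2 = 2 := Real.sq_sqrt (by norm_num)
  have hp0pos : 0 < p₀ := lt_of_lt_of_le hs2 hge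
  have energy : ∀ t, p t ^ 2 + 2 * gfun (q t) = p₀ ^ 2 := by
    intro t
    have := energy_conservation hsol t
    rwa [hp0, hq0, gfun_zero, mul_zero, add_zero] at this
  have hqderiv : ∀ t, deriv q t = p t := fun t => (hsol t).1.deriv
  constructor
  · -- case p₀ > √2
    intro hgt
    have h2lt : 2 < p₀ ^ 2 := by nlinarith
    set c := Real.sqrt (p₀ ^ 2 - 2) with hc_def
    have hcpos : 0 < c := Real.sqrt_pos.2 (by linarith)
    have hcsq : c ^ 2 = p₀ ^ 2 - 2 := Real.sq_sqrt (by linarith)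
    have hlb : ∀ t, c ^ 2 ≤ p t ^ 2 := by
      intro t
      have h1 := energy t
      have h2 := gfun_le_one (q t)
      nlinarith
    have hne : ∀ t, p t ≠ 0 := by
      intro t h
      have := hlb t
      rw [h] at this
      nlinarith
    have hppos := p_pos' hsol hne (by rw [hp0]; exact hp0pos)
    have hplb : ∀ t, c ≤ p t := by
      intro t
      calc c = Real.sqrt (c ^ 2) := (Real.sqrt_sq hcpos.le).symm
        _ ≤ Real.sqrt (p t ^ 2) := Real.sqrt_le_sqrt (hlb t)
        _ = p t := Real.sqrt_sq (hppos t).le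
    have hsm : StrictMono q := strictMono_of_deriv_pos fun t => by
      rw [hqderiv t]; exact hppos t
    refine ⟨hsm.strictMonoOn _, ?_⟩
    have hql := q_lower_bound hsol (fun t _ => hplb t)
    apply tendsto_atTop_mono' atTop (show (fun t => c * t) ≤ᶠ[atTop] q from ?_)
    · exact tendsto_id.const_mul_atTop hcpos
    · filter_upwards [eventually_ge_atTop (0:ℝ)] with t ht
      have := hql t ht
      rw [hq0] at this
      simpa using this
  · -- case p₀ = √2
    intro heqs
    have hE2 : p₀ ^ 2 = 2 := by rw [heqs, hs2sq]
    have hq1 : ∀ t, |q t| < 1 := by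
      intro t
      by_contra hge1
      push_neg at hge1
      have hps : p t = 0 := by
        have h1 := energy t
        rw [gfun_eq_one _ hge1, hE2] at h1
        have h2 : p t ^ 2 = 0 := by linarith
        exact pow_eq_zero_iff (two_ne_zero) |>.mp h2
      have hq00 := no_equilibrium_touch hsol t hge1 hps
      rw [hq0] at hq00
      rw [← hq00, abs_zero] at hge1
      linarith
    have hq_lt1 : ∀ t, q t < 1 := fun t => lt_of_le_of_lt (le_abs_self _) (hq1 t)
    have hpsq : ∀ t, p t ^ 2 = 2 * (1 - q t ^ 2) ^ 4 := by
      intro t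
      have h1 := energy t
      rw [hE2] at h1
      have h2 : gfun (q t) = 1 - (1 - q t ^ 2) ^ 4 := by rw [gfun, if_pos (hq1 t).le]
      rw [h2] at h1
      linarith
    have hne : ∀ t, p t ≠ 0 := by
      intro t h
      have h2 : q t ^ 2 < 1 := by
        rw [← sq_abs]; nlinarith [abs_nonneg (q t), hq1 t]
      have h3 := hpsq t
      rw [h] at h3
      nlinarith [pow_pos (show (0:ℝ) < 1 - q t ^ 2 by linarith) 4]
    have hppos := p_pos' hsol hne (by rw [hp0]; linarith)
    have hsm : StrictMono q := strictMono_of_deriv_pos fun t => by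
      rw [hqderiv t]; exact hppos t
    have hpc : Continuous p := continuous_iff_continuousAt.2 fun t => (hsol t).2.continuousAt
    have hqc : Continuous q := continuous_iff_continuousAt.2 fun t => (hsol t).1.continuousAt
    refine ⟨hsm.strictMonoOn _, ?_, ?_⟩
    · -- concavity
      have hpderiv : ∀ t, deriv p t = -(gd (q t)) := by
        intro t
        have := (hsol t).2
        rw [deriv_gfun] at this
        exact this.deriv
      have hpanti : AntitoneOn p (Set.Ici 0) := by
        apply antitoneOn_of_deriv_nonpos (convex_Ici 0) hpc.continuousOn
        · exact fun x _ => (hsol x).2.differentiableAt.differentiableWithinAt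
        · intro x hx
          rw [interior_Ici] at hx
          rw [hpderiv]
          have : 0 ≤ gd (q x) := gd_nonneg _ (by rw [← hq0]; exact hsm.monotone hx.le)
          linarith
      apply AntitoneOn.concaveOn_of_deriv (convex_Ici 0) hqc.continuousOn
      · exact fun x _ => (hsol x).1.differentiableAt.differentiableWithinAt
      · rw [interior_Ici]
        intro a ha b hb hab
        rw [hqderiv, hqderiv]
        exact hpanti (mem_Ici.2 (le_of_lt ha)) (mem_Ici.2 (le_of_lt hb)) hab
    · -- limit
      have hmono : Monotone q := hsm.monotone
      have hbdd : BddAbove (Set.range q) := ⟨1, by rintro y ⟨t, rfl⟩; exact (hq_lt1 t).le⟩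
      have htend := tendsto_atTop_ciSup hmono hbdd
      set L := ⨆ t, q t with hL_def
      have hL1 : L ≤ 1 := ciSup_le fun t => (hq_lt1 t).le
      have hqleL : ∀ t, q t ≤ L := fun t => le_ciSup hbdd t
      have hL0 : 0 ≤ L := by rw [← hq0]; exact hqleL 0
      have hLeq : L = 1 := by
        by_contra hne1
        have hLlt : L < 1 := lt_of_le_of_ne hL1 hne1
        set c := Real.sqrt 2 * (1 - L ^ 2) ^ 2 with hc_def
        have hL2 : L ^ 2 < 1 := by nlinarith
        have hcpos : 0 < c := mul_pos hs2 (pow_pos (by linarith) 2)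
        have hclb : ∀ t, 0 ≤ t → c ≤ p t := by
          intro t ht
          have hq_ub : q t ≤ L := hqleL t
          have hq_lb : 0 ≤ q t := by rw [← hq0]; exact hmono ht
          have h2 : q t ^ 2 ≤ L ^ 2 := by nlinarith
          have h3 : 1 - L ^ 2 ≤ 1 - q t ^ 2 := by linarith
          have h4 : c ^ 2 ≤ p t ^ 2 := by
            rw [hpsq t, hc_def]
            have h5 : (1 - L ^ 2) ^ 4 ≤ (1 - q t ^ 2) ^ 4 :=
              pow_le_pow_left₀ (by linarith) h3 4
            nlinarith
          calc c = Real.sqrt (c ^ 2) := (Real.sqrt_sq hcpos.le).symm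
            _ ≤ Real.sqrt (p t ^ 2) := Real.sqrt_le_sqrt h4
            _ = p t := Real.sqrt_sq (hppos t).le
        have hql := q_lower_bound hsol hclb (2 / c) (by positivity)
        rw [hq0] at hql
        have hcc : c * (2 / c) = 2 := by field_simp
        have h2le : (2:ℝ) ≤ q (2 / c) := by linarith [hql, hcc]
        have := hq_lt1 (2 / c)
        linarith
      rw [← hLeq]
      exact htend
end
end
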